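/- Let n, m, r be natural numbers and μ > 0, λ > 0 reals with μλ < 1/2, and let ε be a real with 0 < ε < 1. Let (W_s)_{s∈ℕ} and (G_s)_{s∈ℕ} be sequences of n×m real matrices satisfying W_{s+1} = (1 − 2μλ)·W_s − μ·G_s for all s, and rank(G_s) ≤ r for all s. Set k = ⌈log(1/ε)/(2μλ)⌉. Then for every t ≥ k there exists an n×m real matrix M with rank(M) ≤ r·k and ‖W_t − M‖_F ≤ ε · ‖W_{t−k}‖_F. -/
import Mathlib


/-- The Frobenius norm of an n×m real matrix. -/
noncomputable def frobNorm {n m : ℕ} (A : Matrix (Fin n) (Fin m) ℝ) : ℝ :=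
  Real.sqrt (∑ i, ∑ j, (A i j) ^ 2)

lemma aux_rank_add_le {n m : ℕ} (A B : Matrix (Fin n) (Fin m) ℝ) :
    (A + B).rank ≤ A.rank + B.rank := by
  unfold Matrix.rank
  rw [Matrix.mulVecLin_add]
  have h : LinearMap.range (A.mulVecLin + B.mulVecLin) ≤
      LinearMap.range A.mulVecLin ⊔ LinearMap.range B.mulVecLin := by
    rintro x ⟨v, rfl⟩
    exact Submodule.add_mem_sup (LinearMap.mem_range_self _ v) (LinearMap.mem_range_self _ v)
  exact (Submodule.finrank_mono h).trans
    (Submodule.finrank_add_le_finrank_add_finrank _ _)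

lemma aux_rank_smul_le {n m : ℕ} (c : ℝ) (A : Matrix (Fin n) (Fin m) ℝ) :
    (c • A).rank ≤ A.rank := by
  have h : c • A = (c • (1 : Matrix (Fin n) (Fin n) ℝ)) * A := by
    rw [Matrix.smul_mul, Matrix.one_mul]
  rw [h]
  exact Matrix.rank_mul_le_right _ _

lemma aux_frob_smul {n m : ℕ} (c : ℝ) (A : Matrix (Fin n) (Fin m) ℝ) :
    frobNorm (c • A) = |c| * frobNorm A := by
  unfold frobNorm
  have h : ∑ i, ∑ j, ((c • A) i j) ^ 2 = c ^ 2 * ∑ i, ∑ j, (A i j) ^ 2 := by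
    simp_rw [Matrix.smul_apply, smul_eq_mul, mul_pow, Finset.mul_sum]
  rw [h, Real.sqrt_mul (sq_nonneg c), Real.sqrt_sq_eq_abs]

lemma aux_frob_nonneg {n m : ℕ} (A : Matrix (Fin n) (Fin m) ℝ) : 0 ≤ frobNorm A :=
  Real.sqrt_nonneg _

/-- Under the recursion `W_{s+1} = (1−2μλ)·W_s − μ·G_s` with
`rank(G_s) ≤ r`, `μ, λ > 0`, `μλ < 1/2` and `0 < ε < 1`, setting
`k = ⌈log(1/ε)/(2μλ)⌉`, for every `t ≥ k` there is a matrix `M` with `rank(M) ≤ r·k` and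
`‖W_t − M‖_F ≤ ε · ‖W_{t−k}‖_F`. -/
theorem stmt14 {n m r : ℕ} (μ lam ε : ℝ) (hμ : 0 < μ) (hlam : 0 < lam)
    (hμlam : μ * lam < 1 / 2) (hε₀ : 0 < ε) (hε₁ : ε < 1)
    (W G : ℕ → Matrix (Fin n) (Fin m) ℝ)
    (hW : ∀ s, W (s + 1) = (1 - 2 * μ * lam) • W s - μ • G s)
    (hG : ∀ s, (G s).rank ≤ r)
    (k : ℕ) (hk : k = ⌈Real.log (1 / ε) / (2 * μ * lam)⌉₊) :
    ∀ t : ℕ, k ≤ t →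
      ∃ M : Matrix (Fin n) (Fin m) ℝ, M.rank ≤ r * k ∧
        frobNorm (W t - M) ≤ ε * frobNorm (W (t - k)) := by
  set c : ℝ := 1 - 2 * μ * lam with hc
  have ha : (0:ℝ) < 2 * μ * lam := by positivity
  have hc0 : 0 ≤ c := by rw [hc]; nlinarith
  -- unrolling lemma
  have key : ∀ j s, ∃ M : Matrix (Fin n) (Fin m) ℝ,
      M.rank ≤ r * j ∧ W (s + j) = c ^ j • W s + M := by
    intro j
    induction j with
    | zero => intro s; exact ⟨0, by simp⟩
    | succ j ih =>
      intro s
      obtain ⟨M, hM, hEq⟩ := ih s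
      refine ⟨c • M - μ • G (s + j), ?_, ?_⟩
      · have h1 : c • M - μ • G (s + j) = c • M + (-μ) • G (s + j) := by
          rw [neg_smul, sub_eq_add_neg]
        rw [h1]
        calc (c • M + (-μ) • G (s + j)).rank
            ≤ (c • M).rank + ((-μ) • G (s + j)).rank := aux_rank_add_le _ _
          _ ≤ M.rank + (G (s + j)).rank :=
              add_le_add (aux_rank_smul_le _ _) (aux_rank_smul_le _ _)
          _ ≤ r * j + r := add_le_add hM (hG _)
          _ = r * (j + 1) := by ring
      · have h2 : s + (j + 1) = (s + j) + 1 := by ring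
        rw [h2, hW, hEq, smul_add, smul_smul, ← pow_succ']
        abel
  intro t ht
  obtain ⟨M, hM, hEq⟩ := key k (t - k)
  rw [Nat.sub_add_cancel ht] at hEq
  refine ⟨M, hM, ?_⟩
  have hsub : W t - M = c ^ k • W (t - k) := by rw [hEq]; abel
  rw [hsub, aux_frob_smul, abs_of_nonneg (pow_nonneg hc0 k)]
  have hck : c ^ k ≤ ε := by
    have hc1 : c ≤ Real.exp (-(2 * μ * lam)) := by
      have := Real.add_one_le_exp (-(2 * μ * lam))
      rw [hc]; linarith
    have hpow : c ^ k ≤ Real.exp (-(2 * μ * lam)) ^ k :=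
      pow_le_pow_left₀ hc0 hc1 k
    have hexp : Real.exp (-(2 * μ * lam)) ^ k = Real.exp ((k : ℝ) * (-(2 * μ * lam))) := by
      rw [Real.exp_nat_mul]
    have hceil : Real.log (1 / ε) / (2 * μ * lam) ≤ (k : ℝ) := by
      rw [hk]; exact Nat.le_ceil _
    have hlogk : Real.log (1 / ε) ≤ (k : ℝ) * (2 * μ * lam) := by
      rw [div_le_iff₀ ha] at hceil; linarith
    have hlog : Real.log (1 / ε) = -Real.log ε := by
      rw [one_div, Real.log_inv]
    have : Real.exp ((k : ℝ) * (-(2 * μ * lam))) ≤ ε := by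
      have h3 : (k : ℝ) * (-(2 * μ * lam)) ≤ Real.log ε := by
        rw [hlog] at hlogk; linarith
      calc Real.exp ((k : ℝ) * (-(2 * μ * lam))) ≤ Real.exp (Real.log ε) :=
            Real.exp_le_exp.mpr h3
        _ = ε := Real.exp_log hε₀
    calc c ^ k ≤ Real.exp (-(2 * μ * lam)) ^ k := hpow
      _ = Real.exp ((k : ℝ) * (-(2 * μ * lam))) := hexp
      _ ≤ ε := this
  exact mul_le_mul_of_nonneg_right hck (aux_frob_nonneg _)
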